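/- Let φ(t) = Σ_{n≥1} a_n t^n/n! be a formal power series with real coefficients, V_n(x) = Σ_{k=0}^n B_{n,k}(a) x^k where B_{n,k}(a) are the partial Bell polynomials of the sequence (a_n), and f_n(x) = Σ_{k=0}^n B_{n,k}(a) (x)_k with (x)_k the falling factorial. Define V_{n,r}(x) by the generating function Σ_{n≥0} V_{n,r}(x) t^n/n! = (1+φ(t))^r exp(xφ(t)). Then V_{n,r}(x) = e^{-x} Σ_{j≥0} f_n(j+r) x^j/j!, and consequently: if V_n = V_{n,0} has only real zeros for all relevant x, then V_{n,r} has only real zeros. -/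

import Mathlib

open PowerSeries

/-- A real polynomial has only real zeros: every complex root has imaginary part zero. -/
def RZ (p : Polynomial ℝ) : Prop :=
  ∀ z : ℂ, (p.map (algebraMap ℝ ℂ)).IsRoot z → z.im = 0

/-- The formal power series `φ(t) = ∑_{n ≥ 1} a_n t^n / n!`. -/
noncomputable def phiSeries (a : ℕ → ℝ) : PowerSeries ℝ :=
  PowerSeries.mk fun j => if j = 0 then 0 else a j / (j.factorial : ℝ)

/-- The partial Bell polynomial `B_{n,k}(a)`, defined by
`∑_{n ≥ k} B_{n,k}(a) t^n/n! = φ(t)^k / k!`. -/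
noncomputable def partialBell (a : ℕ → ℝ) (n k : ℕ) : ℝ :=
  (n.factorial : ℝ) * PowerSeries.coeff n ((phiSeries a) ^ k) / (k.factorial : ℝ)

/-- `f_n(y) = ∑_{k=0}^n B_{n,k}(a) (y)_k`, with `(y)_k` the falling factorial. -/
noncomputable def fEval (a : ℕ → ℝ) (n : ℕ) (y : ℝ) : ℝ :=
  ∑ k ∈ Finset.range (n + 1), partialBell a n k * (descPochhammer ℝ k).eval y

/-- The polynomial `V_{n,r}(x)`, defined by the generating function
`∑_n V_{n,r}(x) t^n/n! = (1 + φ(t))^r exp(x φ(t))`; its coefficient of `x^k` is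
`(n!/k!) · [t^n] ((1+φ)^r φ^k)`. In particular `V_{n,0} = V_n = ∑_k B_{n,k}(a) x^k`. -/
noncomputable def Vpoly (a : ℕ → ℝ) (r n : ℕ) : Polynomial ℝ :=
  ∑ k ∈ Finset.range (n + 1),
    Polynomial.C ((n.factorial : ℝ) / (k.factorial : ℝ) *
      PowerSeries.coeff n ((1 + phiSeries a) ^ r * (phiSeries a) ^ k)) * Polynomial.X ^ k

/-! ### Auxiliary lemmas for real-rootedness -/

lemma multiset_sum_pos {s : Multiset ℝ} (h : ∀ x ∈ s, 0 < x) (hs : s ≠ 0) : 0 < s.sum := by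
  induction s using Multiset.induction_on with
  | empty => simp at hs
  | cons a t ih =>
    rw [Multiset.sum_cons]
    rcases eq_or_ne t 0 with rfl | ht
    · simpa using h a (Multiset.mem_cons_self a 0)
    · have h1 := ih (fun x hx => h x (Multiset.mem_cons_of_mem hx)) ht
      have h2 := h a (Multiset.mem_cons_self a t)
      linarith

lemma multiset_sum_neg {s : Multiset ℝ} (h : ∀ x ∈ s, x < 0) (hs : s ≠ 0) : s.sum < 0 := by
  induction s using Multiset.induction_on with
  | empty => simp at hs
  | cons a t ih =>
    rw [Multiset.sum_cons]
    rcases eq_or_ne t 0 with rfl | ht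
    · simpa using h a (Multiset.mem_cons_self a 0)
    · have h1 := ih (fun x hx => h x (Multiset.mem_cons_of_mem hx)) ht
      have h2 := h a (Multiset.mem_cons_self a t)
      linarith

open Polynomial in
lemma derivative_eval_multiset (z : ℂ) (s : Multiset ℂ)
    (hs : (Multiset.map (fun ρ => Polynomial.X - Polynomial.C ρ) s).prod.eval z ≠ 0) :
    (derivative (Multiset.map (fun ρ => Polynomial.X - Polynomial.C ρ) s).prod).eval z
      = (Multiset.map (fun ρ => Polynomial.X - Polynomial.C ρ) s).prod.eval z
        * (Multiset.map (fun ρ => (z - ρ)⁻¹) s).sum := by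
  induction s using Multiset.induction_on with
  | empty => simp
  | cons ρ t ih =>
    simp only [Multiset.map_cons, Multiset.prod_cons, Multiset.sum_cons] at *
    have hzρ : z - ρ ≠ 0 := by
      intro h; apply hs; simp [eval_mul, h]
    have ht : (Multiset.map (fun ρ => Polynomial.X - Polynomial.C ρ) t).prod.eval z ≠ 0 := by
      intro h; apply hs; simp [eval_mul, h]
    rw [derivative_mul, eval_add, eval_mul, eval_mul, ih ht]
    simp only [derivative_sub, Polynomial.derivative_X, Polynomial.derivative_C, sub_zero, eval_one, eval_mul, eval_sub,
      eval_X, eval_C, one_mul]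
    field_simp

open Polynomial in
/-- If a real polynomial has only real zeros, then so does `p + p'`. -/
lemma RZ_add_derivative {p : Polynomial ℝ} (hp : RZ p) : RZ (p + derivative p) := by
  intro z hz
  have hp0 : p ≠ 0 := by
    rintro rfl
    simpa using hp Complex.I (by simp [IsRoot])
  set q := p.map (algebraMap ℝ ℂ) with hqdef
  have hq0 : q ≠ 0 := by
    simpa [hqdef, Polynomial.map_ne_zero_iff (algebraMap ℝ ℂ).injective] using hp0
  have hz' : q.eval z + (derivative q).eval z = 0 := by
    have h0 : ((p + derivative p).map (algebraMap ℝ ℂ)).eval z = 0 := hz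
    rw [Polynomial.map_add, eval_add, ← derivative_map] at h0
    exact h0
  by_cases hqz : q.eval z = 0
  · exact hp z hqz
  have hsplit : Splits q := IsAlgClosed.splits q
  set c := q.leadingCoeff with hc
  set R := q.roots with hR
  have hfac : q = Polynomial.C c * (Multiset.map (fun ρ => Polynomial.X - Polynomial.C ρ) R).prod := hsplit.eq_prod_roots
  set S := (Multiset.map (fun ρ => (z - ρ)⁻¹) R).sum with hSdef
  have hprod_ne : (Multiset.map (fun ρ => Polynomial.X - Polynomial.C ρ) R).prod.eval z ≠ 0 := by
    intro h
    apply hqz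
    rw [hfac, eval_mul, h, mul_zero]
  have hR_ne : R ≠ 0 := by
    intro h
    rw [h] at hfac
    simp only [Multiset.map_zero, Multiset.prod_zero, mul_one] at hfac
    rw [hfac] at hz'
    simp only [Polynomial.derivative_C, eval_zero, Polynomial.eval_C, add_zero] at hz'
    rw [hfac] at hqz
    simp [hz'] at hqz
  have hderiv : (derivative q).eval z = q.eval z * S := by
    conv_lhs => rw [hfac]
    rw [derivative_C_mul, eval_mul, derivative_eval_multiset z R hprod_ne, hfac]
    rw [eval_mul, Polynomial.eval_C]
    ring
  have hS : S = -1 := by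
    rw [hderiv] at hz'
    have h1 : q.eval z * (1 + S) = 0 := by linear_combination hz'
    rcases mul_eq_zero.1 h1 with h | h
    · exact absurd h hqz
    · linear_combination h
  -- now take imaginary parts
  have hzero : ∀ ρ ∈ R, z - ρ ≠ 0 := by
    intro ρ hρ h0
    apply hprod_ne
    rw [eval_multiset_prod, Multiset.map_map]
    apply Multiset.prod_eq_zero
    exact Multiset.mem_map.2 ⟨ρ, hρ, by simp [h0]⟩
  have hreal : ∀ ρ ∈ R, ρ.im = 0 := by
    intro ρ hρ
    exact hp ρ (isRoot_of_mem_roots hρ)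
  have him : ((Multiset.map (fun ρ => (z - ρ)⁻¹) R).sum).im = 0 := by
    rw [hSdef] at hS
    rw [hS]
    simp
  rw [← Complex.coe_imAddGroupHom, AddMonoidHom.map_multiset_sum, Multiset.map_map] at him
  have hterm : ∀ ρ ∈ R, (Complex.imAddGroupHom ∘ fun ρ => (z - ρ)⁻¹) ρ
      = -z.im / Complex.normSq (z - ρ) := by
    intro ρ hρ
    simp only [Function.comp_apply, Complex.coe_imAddGroupHom, Complex.inv_im]
    rw [Complex.sub_im, hreal ρ hρ, sub_zero]
  rw [Multiset.map_congr rfl hterm] at him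
  by_contra him0
  rcases lt_or_gt_of_ne him0 with hlt | hgt
  · have : 0 < (Multiset.map (fun ρ => -z.im / Complex.normSq (z - ρ)) R).sum := by
      apply multiset_sum_pos
      · intro x hx
        obtain ⟨ρ, hρ, rfl⟩ := Multiset.mem_map.1 hx
        have h2 : 0 < Complex.normSq (z - ρ) := Complex.normSq_pos.2 (hzero ρ hρ)
        exact div_pos (by linarith) h2
      · simpa using hR_ne
    linarith [him, this]
  · have : (Multiset.map (fun ρ => -z.im / Complex.normSq (z - ρ)) R).sum < 0 := by
      apply multiset_sum_neg
      · intro x hx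
        obtain ⟨ρ, hρ, rfl⟩ := Multiset.mem_map.1 hx
        have h2 : 0 < Complex.normSq (z - ρ) := Complex.normSq_pos.2 (hzero ρ hρ)
        apply div_neg_of_neg_of_pos _ h2
        linarith
      · simpa using hR_ne
    linarith [him, this]

/-! ### Power series coefficient lemmas -/

lemma coeff_mul_phi_pow_eq_zero (a : ℕ → ℝ) (ψ : PowerSeries ℝ) {n k : ℕ} (h : n < k) :
    PowerSeries.coeff n (ψ * phiSeries a ^ k) = 0 := by
  obtain ⟨χ, hχ⟩ : (PowerSeries.X : PowerSeries ℝ) ∣ phiSeries a := by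
    rw [PowerSeries.X_dvd_iff]
    simp [phiSeries]
  have : ψ * phiSeries a ^ k = PowerSeries.X ^ k * (ψ * χ ^ k) := by
    rw [hχ]; ring
  rw [this, PowerSeries.coeff_X_pow_mul']
  simp [Nat.not_le_of_lt h]

lemma partialBell_eq_zero (a : ℕ → ℝ) {n k : ℕ} (h : n < k) : partialBell a n k = 0 := by
  have : PowerSeries.coeff n ((1 : PowerSeries ℝ) * phiSeries a ^ k) = 0 :=
    coeff_mul_phi_pow_eq_zero a 1 h
  rw [one_mul] at this
  simp [partialBell, this]

lemma Vpoly_coeff (a : ℕ → ℝ) (r n j : ℕ) :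
    (Vpoly a r n).coeff j = if j ≤ n then
      (n.factorial : ℝ) / (j.factorial : ℝ) *
        PowerSeries.coeff n ((1 + phiSeries a) ^ r * (phiSeries a) ^ j) else 0 := by
  rw [Vpoly, Polynomial.finset_sum_coeff]
  simp only [Polynomial.coeff_C_mul, Polynomial.coeff_X_pow]
  rw [Finset.sum_congr rfl (fun k _ => by rw [mul_ite, mul_one, mul_zero])]
  rw [Finset.sum_ite_eq (Finset.range (n+1))]
  simp [Nat.lt_succ_iff]

lemma Vpoly_succ (a : ℕ → ℝ) (n r : ℕ) :
    Vpoly a (r + 1) n = Vpoly a r n + Polynomial.derivative (Vpoly a r n) := by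
  ext j
  rw [Polynomial.coeff_add, Polynomial.coeff_derivative, Vpoly_coeff, Vpoly_coeff, Vpoly_coeff]
  have key : ∀ k : ℕ, ((1 + phiSeries a) ^ (r+1) * (phiSeries a) ^ k)
      = (1 + phiSeries a) ^ r * (phiSeries a) ^ k
        + (1 + phiSeries a) ^ r * (phiSeries a) ^ (k+1) := by
    intro k; ring
  by_cases hj : j ≤ n
  · rw [if_pos hj, if_pos hj, key, map_add]
    by_cases hj' : j + 1 ≤ n
    · rw [if_pos hj']
      have hfac : ((j+1).factorial : ℝ) = (j.factorial : ℝ) * (j + 1 : ℝ) := by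
        push_cast [Nat.factorial_succ]; ring
      rw [hfac]
      have h1 : (j.factorial : ℝ) ≠ 0 := Nat.cast_ne_zero.2 (Nat.factorial_ne_zero j)
      have h2 : (j + 1 : ℝ) ≠ 0 := by positivity
      field_simp
    · rw [if_neg hj']
      have hjn : j = n := le_antisymm hj (by omega)
      subst hjn
      have h0 : PowerSeries.coeff j ((1 + phiSeries a) ^ r * phiSeries a ^ (j+1)) = 0 :=
        coeff_mul_phi_pow_eq_zero a _ (Nat.lt_succ_self j)
      rw [h0]
      ring
  · rw [if_neg hj, if_neg hj, if_neg (by omega : ¬ j + 1 ≤ n)]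
    ring

/-! ### Series summation lemmas -/

lemma hasSum_exp_real (x : ℝ) :
    HasSum (fun m : ℕ => x ^ m / (m.factorial : ℝ)) (Real.exp x) := by
  have h := (Real.summable_pow_div_factorial x).hasSum
  have he : Real.exp x = ∑' m : ℕ, x ^ m / (m.factorial : ℝ) := by
    rw [Real.exp_eq_exp_ℝ, NormedSpace.exp_eq_tsum_div]
  rwa [← he] at h

lemma hasSum_descFactorial (x : ℝ) (i : ℕ) :
    HasSum (fun j : ℕ => (j.descFactorial i : ℝ) * x ^ j / (j.factorial : ℝ))
      (x ^ i * Real.exp x) := by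
  have hg : Function.Injective (fun m : ℕ => m + i) := add_left_injective i
  rw [← Function.Injective.hasSum_iff hg ?side]
  · have heq : (fun m : ℕ => ((m + i).descFactorial i : ℝ) * x ^ (m + i) / ((m + i).factorial : ℝ))
        = fun m : ℕ => x ^ i * (x ^ m / (m.factorial : ℝ)) := by
      funext m
      have h1 : ((m + i).factorial : ℝ) = ((m+i).descFactorial i : ℝ) * (m.factorial : ℝ) := by
        rw [Nat.descFactorial_eq_factorial_mul_choose]
        push_cast
        rw [← Nat.cast_mul, ← Nat.cast_mul]
        congr 1
        calc (m + i).factorial = (m+i).choose i * i.factorial * ((m+i) - i).factorial :=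
              (Nat.choose_mul_factorial_mul_factorial (Nat.le_add_left i m)).symm
          _ = i.factorial * (m+i).choose i * m.factorial := by
              rw [Nat.add_sub_cancel]; ring
      have h2 : ((m + i).descFactorial i : ℝ) ≠ 0 := by
        rw [Ne, Nat.cast_eq_zero, Nat.descFactorial_eq_zero_iff_lt]
        omega
      have h3 : (m.factorial : ℝ) ≠ 0 := Nat.cast_ne_zero.2 (Nat.factorial_ne_zero m)
      rw [h1, pow_add]
      field_simp
    show HasSum ((fun j : ℕ => (j.descFactorial i : ℝ) * x ^ j / (j.factorial : ℝ)) ∘ (fun m => m + i)) _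
    have : ((fun j : ℕ => (j.descFactorial i : ℝ) * x ^ j / (j.factorial : ℝ)) ∘ (fun m => m + i))
        = fun m : ℕ => ((m + i).descFactorial i : ℝ) * x ^ (m + i) / ((m + i).factorial : ℝ) := rfl
    rw [this, heq]
    exact (hasSum_exp_real x).mul_left (x ^ i)
  · intro j hj
    have : j < i := by
      by_contra h
      exact hj ⟨j - i, show j - i + i = j by omega⟩
    rw [Nat.descFactorial_eq_zero_iff_lt.2 this]
    simp

lemma nat_vandermonde (j r k : ℕ) :
    (j + r).descFactorial k
      = ∑ i ∈ Finset.range (k + 1), k.choose i * (j.descFactorial i * r.descFactorial (k - i)) := by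
  rw [Nat.descFactorial_eq_factorial_mul_choose, Nat.add_choose_eq, Finset.mul_sum,
    Finset.Nat.sum_antidiagonal_eq_sum_range_succ_mk]
  refine Finset.sum_congr rfl fun i hi => ?_
  have hik : i ≤ k := Nat.lt_succ_iff.1 (Finset.mem_range.1 hi)
  rw [Nat.descFactorial_eq_factorial_mul_choose, Nat.descFactorial_eq_factorial_mul_choose,
    ← Nat.choose_mul_factorial_mul_factorial hik]
  ring

lemma hasSum_key (x : ℝ) (r k : ℕ) :
    HasSum (fun j : ℕ => (((j + r).descFactorial k : ℕ) : ℝ) * x ^ j / (j.factorial : ℝ))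
      (Real.exp x * ∑ i ∈ Finset.range (k + 1),
        (k.choose i : ℝ) * (r.descFactorial (k - i) : ℝ) * x ^ i) := by
  have heq : (fun j : ℕ => (((j + r).descFactorial k : ℕ) : ℝ) * x ^ j / (j.factorial : ℝ))
      = fun j : ℕ => ∑ i ∈ Finset.range (k + 1),
        ((k.choose i : ℝ) * (r.descFactorial (k - i) : ℝ)) *
          ((j.descFactorial i : ℝ) * x ^ j / (j.factorial : ℝ)) := by
    funext j
    rw [nat_vandermonde j r k]
    push_cast
    rw [Finset.sum_mul, Finset.sum_div]
    refine Finset.sum_congr rfl fun i _ => ?_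
    ring
  rw [heq]
  have h := hasSum_sum (fun i (_ : i ∈ Finset.range (k + 1)) =>
    (hasSum_descFactorial x i).mul_left ((k.choose i : ℝ) * (r.descFactorial (k - i) : ℝ)))
  convert h using 1
  · rfl
  rw [Finset.mul_sum]
  refine Finset.sum_congr rfl fun i _ => ?_
  ring

/-! ### The coefficient identity -/

lemma coeff_identity (a : ℕ → ℝ) (n r i : ℕ) (hi : i ≤ n) :
    ∑ k ∈ Finset.range (n + 1),
        partialBell a n k * ((k.choose i : ℝ) * (r.descFactorial (k - i) : ℝ))
      = (n.factorial : ℝ) / (i.factorial : ℝ) *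
          PowerSeries.coeff n ((1 + phiSeries a) ^ r * phiSeries a ^ i) := by
  set φ := phiSeries a with hφ
  have hbin : (1 + φ) ^ r = ∑ m ∈ Finset.range (r + 1), φ ^ m * ((r.choose m : ℕ) : PowerSeries ℝ) := by
    rw [add_comm]
    rw [add_pow]
    refine Finset.sum_congr rfl fun m _ => by rw [one_pow, mul_one]
  have hRHS : PowerSeries.coeff n ((1 + φ) ^ r * φ ^ i)
      = ∑ m ∈ Finset.range (r + 1), (r.choose m : ℝ) * PowerSeries.coeff n (φ ^ (m + i)) := by
    rw [hbin, Finset.sum_mul, map_sum]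
    refine Finset.sum_congr rfl fun m _ => ?_
    have : φ ^ m * ((r.choose m : ℕ) : PowerSeries ℝ) * φ ^ i
        = PowerSeries.C ((r.choose m : ℕ) : ℝ) * φ ^ (m + i) := by
      rw [map_natCast (PowerSeries.C (R := ℝ)) (r.choose m), pow_add]
      ring
    rw [this, PowerSeries.coeff_C_mul]
  rw [hRHS]
  have hL1 : ∑ k ∈ Finset.range (n + 1),
      partialBell a n k * ((k.choose i : ℝ) * (r.descFactorial (k - i) : ℝ))
      = ∑ k ∈ Finset.Ico i (n + 1),
      partialBell a n k * ((k.choose i : ℝ) * (r.descFactorial (k - i) : ℝ)) := by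
    rw [Finset.range_eq_Ico]
    refine (Finset.sum_subset (Finset.Ico_subset_Ico (Nat.zero_le i) le_rfl) ?_).symm
    intro k hk hk'
    have : k < i := by
      simp only [Finset.mem_Ico] at hk hk'
      omega
    rw [Nat.choose_eq_zero_of_lt this]
    simp
  rw [hL1, Finset.sum_Ico_eq_sum_range]
  have hN : ∀ N : ℕ, n + 1 - i ≤ N → r + 1 ≤ N →
      (∑ m ∈ Finset.range (n + 1 - i),
        partialBell a n (i + m) * (((i + m).choose i : ℝ) * (r.descFactorial (i + m - i) : ℝ))
      = ∑ m ∈ Finset.range N,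
        partialBell a n (i + m) * (((i + m).choose i : ℝ) * (r.descFactorial (i + m - i) : ℝ)))
      ∧ (∑ m ∈ Finset.range (r + 1), (r.choose m : ℝ) * PowerSeries.coeff n (φ ^ (m + i))
      = ∑ m ∈ Finset.range N, (r.choose m : ℝ) * PowerSeries.coeff n (φ ^ (m + i))) := by
    intro N h1 h2
    constructor
    · refine Finset.sum_subset (Finset.range_subset_range.2 h1) ?_
      intro m hm hm'
      have : n < i + m := by
        simp only [Finset.mem_range] at hm hm'
        omega
      rw [partialBell_eq_zero a this]
      simp
    · refine Finset.sum_subset (Finset.range_subset_range.2 h2) ?_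
      intro m hm hm'
      have : r < m := by
        simp only [Finset.mem_range] at hm hm'
        omega
      rw [Nat.choose_eq_zero_of_lt this]
      simp
  obtain ⟨e1, e2⟩ := hN (n + r + 1) (by omega) (by omega)
  rw [e1, e2, Finset.mul_sum]
  refine Finset.sum_congr rfl fun m _ => ?_
  rw [Nat.add_sub_cancel_left, partialBell, show m + i = i + m from Nat.add_comm m i]
  set C := PowerSeries.coeff n (φ ^ (i + m)) with hC
  have hch : (((i + m).choose i : ℕ) : ℝ) * (i.factorial : ℝ) * (m.factorial : ℝ)
      = ((i + m).factorial : ℝ) := by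
    have := Nat.choose_mul_factorial_mul_factorial (Nat.le_add_right i m)
    rw [Nat.add_sub_cancel_left] at this
    exact_mod_cast congrArg (Nat.cast (R := ℝ)) this
  have hdf : ((r.descFactorial m : ℕ) : ℝ) = (m.factorial : ℝ) * (r.choose m : ℝ) := by
    exact_mod_cast congrArg (Nat.cast (R := ℝ)) (Nat.descFactorial_eq_factorial_mul_choose r m)
  have h1 : (i.factorial : ℝ) ≠ 0 := Nat.cast_ne_zero.2 (Nat.factorial_ne_zero i)
  have h2 : (m.factorial : ℝ) ≠ 0 := Nat.cast_ne_zero.2 (Nat.factorial_ne_zero m)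
  have h3 : (((i + m).factorial : ℕ) : ℝ) ≠ 0 := Nat.cast_ne_zero.2 (Nat.factorial_ne_zero _)
  rw [hdf]
  field_simp
  linear_combination C * (r.choose m : ℝ) * hch

/-! ### The umbral evaluation formula -/

lemma Vpoly_eval (a : ℕ → ℝ) (n r : ℕ) (x : ℝ) :
    (Vpoly a r n).eval x =
      Real.exp (-x) * ∑' j : ℕ, fEval a n ((j : ℝ) + r) * x ^ j / (j.factorial : ℝ) := by
  -- rewrite the summand
  have hfE : ∀ j : ℕ, fEval a n ((j : ℝ) + r) * x ^ j / (j.factorial : ℝ)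
      = ∑ k ∈ Finset.range (n + 1), partialBell a n k *
          ((((j + r).descFactorial k : ℕ) : ℝ) * x ^ j / (j.factorial : ℝ)) := by
    intro j
    have hcast : ((j : ℝ) + r) = (((j + r : ℕ) : ℕ) : ℝ) := by push_cast; ring
    rw [fEval, hcast]
    rw [Finset.sum_congr rfl fun k _ => by
      rw [descPochhammer_eval_eq_descFactorial ℝ (j + r) k]]
    rw [Finset.sum_mul, Finset.sum_div]
    refine Finset.sum_congr rfl fun k _ => ?_
    ring
  have hsum : HasSum (fun j : ℕ => fEval a n ((j : ℝ) + r) * x ^ j / (j.factorial : ℝ))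
      (Real.exp x * ∑ k ∈ Finset.range (n + 1), partialBell a n k *
        (∑ i ∈ Finset.range (k + 1),
          (k.choose i : ℝ) * (r.descFactorial (k - i) : ℝ) * x ^ i)) := by
    have h := hasSum_sum (fun k (_ : k ∈ Finset.range (n + 1)) =>
      (hasSum_key x r k).mul_left (partialBell a n k))
    have heq : (fun j : ℕ => fEval a n ((j : ℝ) + r) * x ^ j / (j.factorial : ℝ))
        = fun j : ℕ => ∑ k ∈ Finset.range (n + 1), partialBell a n k *
            ((((j + r).descFactorial k : ℕ) : ℝ) * x ^ j / (j.factorial : ℝ)) := funext hfE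
    rw [heq]
    convert h using 1
    · rfl
    rw [Finset.mul_sum]
    refine Finset.sum_congr rfl fun k _ => ?_
    ring
  rw [hsum.tsum_eq, ← mul_assoc, ← Real.exp_add, neg_add_cancel, Real.exp_zero, one_mul]
  -- LHS evaluation
  have hLHS : (Vpoly a r n).eval x = ∑ k ∈ Finset.range (n + 1),
      ((n.factorial : ℝ) / (k.factorial : ℝ) *
        PowerSeries.coeff n ((1 + phiSeries a) ^ r * (phiSeries a) ^ k)) * x ^ k := by
    rw [Vpoly, Polynomial.eval_finset_sum]
    refine Finset.sum_congr rfl fun k _ => ?_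
    simp
  rw [hLHS]
  -- expand inner sums to range (n+1) and swap
  have hinner : ∀ k ∈ Finset.range (n + 1),
      partialBell a n k * (∑ i ∈ Finset.range (k + 1),
        (k.choose i : ℝ) * (r.descFactorial (k - i) : ℝ) * x ^ i)
      = ∑ i ∈ Finset.range (n + 1),
        partialBell a n k * ((k.choose i : ℝ) * (r.descFactorial (k - i) : ℝ)) * x ^ i := by
    intro k hk
    have hkn : k + 1 ≤ n + 1 := by
      simp only [Finset.mem_range] at hk
      omega
    rw [Finset.mul_sum, Finset.sum_subset (Finset.range_subset_range.2 hkn)]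
    · refine Finset.sum_congr rfl fun i _ => by ring
    · intro i hi hi'
      have : k < i := by
        simp only [Finset.mem_range] at hi hi'
        omega
      rw [Nat.choose_eq_zero_of_lt this]
      push_cast
      ring
  rw [Finset.sum_congr rfl hinner, Finset.sum_comm]
  refine (Finset.sum_congr rfl fun i hi => ?_).symm
  have hin : i ≤ n := Nat.lt_succ_iff.1 (Finset.mem_range.1 hi)
  rw [← Finset.sum_mul, coeff_identity a n r i hin]

/-- `V_{n,r}(x) = e^{-x} ∑_{j ≥ 0} f_n(j + r) x^j / j!` (the umbral evaluation
`f_n(B_x + r)`), and consequently if `V_n = V_{n,0}` has only real zeros then so does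
`V_{n,r}`. -/
theorem Vpoly_umbral_and_real_rooted (a : ℕ → ℝ) (n r : ℕ) :
    (∀ x : ℝ, (Vpoly a r n).eval x =
        Real.exp (-x) * ∑' j : ℕ, fEval a n ((j : ℝ) + r) * x ^ j / (j.factorial : ℝ)) ∧
      (RZ (Vpoly a 0 n) → RZ (Vpoly a r n)) := by
  constructor
  · exact Vpoly_eval a n r
  · intro h0
    induction r with
    | zero => exact h0
    | succ s ih =>
      rw [Vpoly_succ]
      exact RZ_add_derivative ih
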